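/- arXiv:2212.01666 — 3 statements merged into one kernel-verified Lean document; each statement's English description precedes it below -/
import Mathlib

section
/- Let C = {(b_i^C, d_i^C)}_{i=1}^n and D = {(b_i^D, d_i^D)}_{i=1}^n be two finite indexed families of points with b_i ≤ d_i (representing matched points of two persistence diagrams). Define the Betti curves β_C(t) = Σ_i I_{[b_i^C, d_i^C)}(t) and β_D(t) = Σ_i I_{[b_i^D, d_i^D)}(t). Then ‖β_C - β_D‖₁ ≤ 2 · Σ_i max(|b_i^D - b_i^C|, |d_i^D - d_i^C|). -/
open MeasureTheory

lemma ind_integrable (a b : ℝ) :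
    Integrable (fun t : ℝ => if t ∈ Set.Ico a b then (1:ℝ) else 0) := by
  have : (fun t : ℝ => if t ∈ Set.Ico a b then (1:ℝ) else 0)
      = (Set.Ico a b).indicator (fun _ => (1:ℝ)) := by
    ext t; simp [Set.indicator_apply]
  rw [this, integrable_indicator_iff measurableSet_Ico]
  exact integrableOn_const measure_Ico_lt_top.ne (by simp)

lemma ind_integral (a b : ℝ) (hab : a ≤ b) :
    (∫ t : ℝ, if t ∈ Set.Ico a b then (1:ℝ) else 0) = b - a := by
  have : (fun t : ℝ => if t ∈ Set.Ico a b then (1:ℝ) else 0)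
      = (Set.Ico a b).indicator (fun _ => (1:ℝ)) := by
    ext t; simp [Set.indicator_apply]
  rw [this, integral_indicator_const _ measurableSet_Ico]
  simp [Real.volume_Ico, ENNReal.toReal_ofReal (sub_nonneg.2 hab), hab]

lemma ind_diff_le (a b c d t : ℝ) :
    |(if t ∈ Set.Ico a b then (1:ℝ) else 0) - (if t ∈ Set.Ico c d then (1:ℝ) else 0)| ≤
    (if t ∈ Set.Ico (min a c) (max a c) then (1:ℝ) else 0) +
    (if t ∈ Set.Ico (min b d) (max b d) then (1:ℝ) else 0) := by
  by_cases hA : t ∈ Set.Ico a b <;> by_cases hB : t ∈ Set.Ico c d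
  · rw [if_pos hA, if_pos hB]; split_ifs <;> norm_num
  · rw [if_pos hA, if_neg hB]
    rcases lt_or_ge t c with h | h
    · have h1 : t ∈ Set.Ico (min a c) (max a c) :=
        ⟨le_trans (min_le_left a c) hA.1, lt_of_lt_of_le h (le_max_right a c)⟩
      rw [if_pos h1]; split_ifs <;> norm_num
    · have hd : d ≤ t := by
        by_contra hd; push_neg at hd; exact hB ⟨h, hd⟩
      have h2 : t ∈ Set.Ico (min b d) (max b d) :=
        ⟨le_trans (min_le_right b d) hd, lt_of_lt_of_le hA.2 (le_max_left b d)⟩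
      rw [if_pos h2]; split_ifs <;> norm_num
  · rw [if_neg hA, if_pos hB]
    rcases lt_or_ge t a with h | h
    · have h1 : t ∈ Set.Ico (min a c) (max a c) :=
        ⟨le_trans (min_le_right a c) hB.1, lt_of_lt_of_le h (le_max_left a c)⟩
      rw [if_pos h1]; split_ifs <;> norm_num
    · have hb : b ≤ t := by
        by_contra hb; push_neg at hb; exact hA ⟨h, hb⟩
      have h2 : t ∈ Set.Ico (min b d) (max b d) :=
        ⟨le_trans (min_le_left b d) hb, lt_of_lt_of_le hB.2 (le_max_right b d)⟩
      rw [if_pos h2]; split_ifs <;> norm_num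
  · rw [if_neg hA, if_neg hB]; split_ifs <;> norm_num

lemma single_bound (a b c d : ℝ) (hab : a ≤ b) (hcd : c ≤ d) :
    (∫ t : ℝ, |(if t ∈ Set.Ico a b then (1:ℝ) else 0) -
        (if t ∈ Set.Ico c d then (1:ℝ) else 0)|) ≤ |c - a| + |d - b| := by
  have hint : Integrable (fun t : ℝ => |(if t ∈ Set.Ico a b then (1:ℝ) else 0) -
      (if t ∈ Set.Ico c d then (1:ℝ) else 0)|) :=
    ((ind_integrable a b).sub (ind_integrable c d)).abs
  have hint2 : Integrable (fun t : ℝ =>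
      (if t ∈ Set.Ico (min a c) (max a c) then (1:ℝ) else 0) +
      (if t ∈ Set.Ico (min b d) (max b d) then (1:ℝ) else 0)) :=
    (ind_integrable _ _).add (ind_integrable _ _)
  calc (∫ t : ℝ, |(if t ∈ Set.Ico a b then (1:ℝ) else 0) -
        (if t ∈ Set.Ico c d then (1:ℝ) else 0)|)
      ≤ ∫ t : ℝ, ((if t ∈ Set.Ico (min a c) (max a c) then (1:ℝ) else 0) +
        (if t ∈ Set.Ico (min b d) (max b d) then (1:ℝ) else 0)) :=
        integral_mono hint hint2 (fun t => ind_diff_le a b c d t)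
    _ = (max a c - min a c) + (max b d - min b d) := by
        rw [integral_add (ind_integrable _ _) (ind_integrable _ _),
          ind_integral _ _ (min_le_max), ind_integral _ _ (min_le_max)]
    _ = |c - a| + |d - b| := by
        rw [max_sub_min_eq_abs, max_sub_min_eq_abs]

theorem betti_curve_stability (n : ℕ)
    (bC dC bD dD : Fin n → ℝ)
    (hC : ∀ i, bC i ≤ dC i) (hD : ∀ i, bD i ≤ dD i) :
    (∫ t : ℝ, |(∑ i, if t ∈ Set.Ico (bC i) (dC i) then (1:ℝ) else 0) -
        (∑ i, if t ∈ Set.Ico (bD i) (dD i) then (1:ℝ) else 0)|) ≤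
      2 * ∑ i, max (|bD i - bC i|) (|dD i - dC i|) := by
  have hI : ∀ i : Fin n, Integrable (fun t : ℝ =>
      |(if t ∈ Set.Ico (bC i) (dC i) then (1:ℝ) else 0) -
        (if t ∈ Set.Ico (bD i) (dD i) then (1:ℝ) else 0)|) :=
    fun i => ((ind_integrable _ _).sub (ind_integrable _ _)).abs
  have hL : Integrable (fun t : ℝ =>
      |(∑ i, if t ∈ Set.Ico (bC i) (dC i) then (1:ℝ) else 0) -
        (∑ i, if t ∈ Set.Ico (bD i) (dD i) then (1:ℝ) else 0)|) :=
    ((integrable_finset_sum _ (fun i _ => ind_integrable (bC i) (dC i))).sub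
      (integrable_finset_sum _ (fun i _ => ind_integrable (bD i) (dD i)))).abs
  calc (∫ t : ℝ, |(∑ i, if t ∈ Set.Ico (bC i) (dC i) then (1:ℝ) else 0) -
        (∑ i, if t ∈ Set.Ico (bD i) (dD i) then (1:ℝ) else 0)|)
      ≤ ∫ t : ℝ, ∑ i, |(if t ∈ Set.Ico (bC i) (dC i) then (1:ℝ) else 0) -
          (if t ∈ Set.Ico (bD i) (dD i) then (1:ℝ) else 0)| := by
        refine integral_mono hL (integrable_finset_sum _ (fun i _ => hI i)) (fun t => ?_)
        rw [← Finset.sum_sub_distrib]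
        exact Finset.abs_sum_le_sum_abs _ _
    _ = ∑ i, ∫ t : ℝ, |(if t ∈ Set.Ico (bC i) (dC i) then (1:ℝ) else 0) -
          (if t ∈ Set.Ico (bD i) (dD i) then (1:ℝ) else 0)| :=
        integral_finset_sum _ (fun i _ => hI i)
    _ ≤ ∑ i, (|bD i - bC i| + |dD i - dC i|) :=
        Finset.sum_le_sum (fun i _ => single_bound _ _ _ _ (hC i) (hD i))
    _ ≤ 2 * ∑ i, max (|bD i - bC i|) (|dD i - dC i|) := by
        rw [Finset.mul_sum]
        refine Finset.sum_le_sum (fun i _ => ?_)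
        have h1 := le_max_left (|bD i - bC i|) (|dD i - dC i|)
        have h2 := le_max_right (|bD i - bC i|) (|dD i - dC i|)
        linarith
end

section
/- Let K be a finite set of cells, each cell σ having a dimension dim(σ) ∈ ℕ and two filtration vectors F(σ), F'(σ) ∈ [0, f_∞]ⁿ with ‖F(σ) − F'(σ)‖_∞ ≤ ε and F'(σ) ≥ F(σ) coordinatewise. Define ECP(v) = Σ_{σ : F(σ) ≤ v} (−1)^{dim σ} and ECP'(v) = Σ_{σ : F'(σ) ≤ v} (−1)^{dim σ} for v ∈ [0, f_∞]ⁿ. Then ∫_{[0,f_∞]ⁿ} |ECP(v) − ECP'(v)| dv ≤ |K| · n · ε · f_∞^{n−1}. -/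
open MeasureTheory

theorem ecp_truncated_stability (n : ℕ) (Cell : Type) [Fintype Cell]
    (dimc : Cell → ℕ) (F F' : Cell → (Fin n → ℝ)) (ε finf : ℝ)
    (hε : 0 < ε) (hfinf : 0 < finf)
    (hF : ∀ σ i, 0 ≤ F σ i ∧ F σ i ≤ finf)
    (hF' : ∀ σ i, 0 ≤ F' σ i ∧ F' σ i ≤ finf)
    (hpert : ∀ σ i, |F' σ i - F σ i| ≤ ε)
    (hmono : ∀ σ i, F σ i ≤ F' σ i) :
    (∫ v in {v : Fin n → ℝ | ∀ i, 0 ≤ v i ∧ v i ≤ finf},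
        |(∑ σ : Cell, if ∀ i, F σ i ≤ v i then (-1 : ℝ) ^ (dimc σ) else 0) -
         (∑ σ : Cell, if ∀ i, F' σ i ≤ v i then (-1 : ℝ) ^ (dimc σ) else 0)|) ≤
      (Fintype.card Cell : ℝ) * n * ε * finf ^ (n - 1) := by
  classical
  set Box : Set (Fin n → ℝ) := {v | ∀ i, 0 ≤ v i ∧ v i ≤ finf} with hBox
  have hBoxeq : Box = Set.pi Set.univ (fun _ : Fin n => Set.Icc 0 finf) := by
    ext v
    simp only [hBox, Set.mem_setOf_eq, Set.mem_univ_pi, Set.mem_Icc]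
  have hBoxm : MeasurableSet Box := by
    rw [hBoxeq]; exact MeasurableSet.univ_pi fun i => measurableSet_Icc
  set T : Cell → Fin n → Set (Fin n → ℝ) :=
    fun σ i => Set.pi Set.univ (fun j => Set.Icc (if j = i then F σ i else 0)
      (if j = i then F' σ i else finf)) with hT
  have hTm : ∀ σ i, MeasurableSet (T σ i) :=
    fun σ i => MeasurableSet.univ_pi fun j => measurableSet_Icc
  have hTvol : ∀ σ i, MeasureTheory.volume (T σ i) ≤
      ENNReal.ofReal ε * (ENNReal.ofReal finf) ^ (n - 1) := by
    intro σ i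
    rw [hT]
    rw [MeasureTheory.volume_pi_pi]
    simp only [Real.volume_Icc]
    rw [← Finset.prod_erase_mul _ _ (Finset.mem_univ i)]
    have h1 : ∀ j ∈ Finset.univ.erase i,
        ENNReal.ofReal ((if j = i then F' σ i else finf) - (if j = i then F σ i else 0))
          = ENNReal.ofReal finf := by
      intro j hj
      rw [if_neg (Finset.ne_of_mem_erase hj), if_neg (Finset.ne_of_mem_erase hj), sub_zero]
    rw [Finset.prod_congr rfl h1, Finset.prod_const, Finset.card_erase_of_mem (Finset.mem_univ i)]
    simp only [if_pos rfl, Finset.card_univ, Fintype.card_fin]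
    rw [mul_comm]
    refine mul_le_mul' ?_ le_rfl
    exact ENNReal.ofReal_le_ofReal (le_trans (le_abs_self _) (hpert σ i))
  have hTfin : ∀ σ i, MeasureTheory.volume (T σ i) < ⊤ := by
    intro σ i
    refine lt_of_le_of_lt (hTvol σ i) ?_
    exact ENNReal.mul_lt_top ENNReal.ofReal_lt_top (ENNReal.pow_lt_top ENNReal.ofReal_lt_top)
  set g : (Fin n → ℝ) → ℝ :=
    fun v => ∑ σ : Cell, ∑ i : Fin n, Set.indicator (T σ i) (fun _ => (1:ℝ)) v with hg
  have hind_int : ∀ σ i, Integrable (Set.indicator (T σ i) (fun _ => (1:ℝ)))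
      (MeasureTheory.volume.restrict Box) := by
    intro σ i
    refine Integrable.integrableOn ?_
    rw [integrable_indicator_iff (hTm σ i)]
    exact integrableOn_const (hTfin σ i).ne
  have hgint : Integrable g (MeasureTheory.volume.restrict Box) := by
    refine integrable_finset_sum _ fun σ _ => integrable_finset_sum _ fun i _ => hind_int σ i
  have hbound : ∀ v ∈ Box,
      |(∑ σ : Cell, if ∀ i, F σ i ≤ v i then (-1 : ℝ) ^ (dimc σ) else 0) -
       (∑ σ : Cell, if ∀ i, F' σ i ≤ v i then (-1 : ℝ) ^ (dimc σ) else 0)| ≤ g v := by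
    intro v hv
    rw [← Finset.sum_sub_distrib]
    refine le_trans (Finset.abs_sum_le_sum_abs _ _) (Finset.sum_le_sum fun σ _ => ?_)
    have hnonneg : ∀ i ∈ Finset.univ, (0:ℝ) ≤ Set.indicator (T σ i) (fun _ => (1:ℝ)) v :=
      fun i _ => Set.indicator_nonneg (fun _ _ => zero_le_one) v
    by_cases hF'v : ∀ i, F' σ i ≤ v i
    · have hFv : ∀ i, F σ i ≤ v i := fun i => (hmono σ i).trans (hF'v i)
      rw [if_pos hFv, if_pos hF'v, sub_self, abs_zero]
      exact Finset.sum_nonneg hnonneg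
    · by_cases hFv : ∀ i, F σ i ≤ v i
      · rw [if_pos hFv, if_neg hF'v, sub_zero, abs_pow, abs_neg, abs_one, one_pow]
        push_neg at hF'v
        obtain ⟨i, hi⟩ := hF'v
        have hmem : v ∈ T σ i := by
          rw [hT]
          intro j _
          by_cases hj : j = i
          · subst hj; exact ⟨by simpa using hFv j, by simpa using hi.le⟩
          · simp only [if_neg hj]
            exact ⟨(hv j).1, (hv j).2⟩
        have : Set.indicator (T σ i) (fun _ => (1:ℝ)) v = 1 := Set.indicator_of_mem hmem _
        calc (1:ℝ) = Set.indicator (T σ i) (fun _ => (1:ℝ)) v := this.symm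
          _ ≤ ∑ i : Fin n, Set.indicator (T σ i) (fun _ => (1:ℝ)) v :=
            Finset.single_le_sum hnonneg (Finset.mem_univ i)
      · rw [if_neg hFv, if_neg hF'v, sub_self, abs_zero]
        exact Finset.sum_nonneg hnonneg
  have step1 : (∫ v in Box,
        |(∑ σ : Cell, if ∀ i, F σ i ≤ v i then (-1 : ℝ) ^ (dimc σ) else 0) -
         (∑ σ : Cell, if ∀ i, F' σ i ≤ v i then (-1 : ℝ) ^ (dimc σ) else 0)|)
      ≤ ∫ v in Box, g v := by
    refine integral_mono_of_nonneg ?_ hgint ?_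
    · exact Filter.Eventually.of_forall fun v => abs_nonneg _
    · exact (ae_restrict_mem hBoxm).mono hbound
  refine le_trans step1 ?_
  have hone : ∀ σ i, (∫ v in Box, Set.indicator (T σ i) (fun _ => (1:ℝ)) v)
      ≤ ε * finf ^ (n - 1) := by
    intro σ i
    rw [MeasureTheory.integral_indicator_const (1:ℝ) (hTm σ i)]
    rw [Measure.real, Measure.restrict_apply (hTm σ i)]
    rw [smul_eq_mul, mul_one]
    have h1 : MeasureTheory.volume (T σ i ∩ Box) ≤
        ENNReal.ofReal ε * (ENNReal.ofReal finf) ^ (n - 1) :=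
      le_trans (measure_mono Set.inter_subset_left) (hTvol σ i)
    have h2 : (ENNReal.ofReal ε * (ENNReal.ofReal finf) ^ (n - 1)).toReal
        = ε * finf ^ (n - 1) := by
      rw [ENNReal.toReal_mul, ENNReal.toReal_pow, ENNReal.toReal_ofReal hε.le,
        ENNReal.toReal_ofReal hfinf.le]
    calc (MeasureTheory.volume (T σ i ∩ Box)).toReal
        ≤ (ENNReal.ofReal ε * (ENNReal.ofReal finf) ^ (n - 1)).toReal :=
          ENNReal.toReal_mono
            (ENNReal.mul_lt_top ENNReal.ofReal_lt_top (ENNReal.pow_lt_top ENNReal.ofReal_lt_top)).ne h1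
      _ = ε * finf ^ (n - 1) := h2
  have : (∫ v in Box, g v) ≤ (Fintype.card Cell : ℝ) * n * ε * finf ^ (n - 1) := by
    rw [hg]
    rw [integral_finset_sum _ fun σ _ => integrable_finset_sum _ fun i _ => hind_int σ i]
    calc ∑ σ : Cell, ∫ v in Box, ∑ i : Fin n, Set.indicator (T σ i) (fun _ => (1:ℝ)) v
        = ∑ σ : Cell, ∑ i : Fin n, ∫ v in Box, Set.indicator (T σ i) (fun _ => (1:ℝ)) v := by
          refine Finset.sum_congr rfl fun σ _ => ?_
          exact integral_finset_sum _ fun i _ => hind_int σ i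
      _ ≤ ∑ _σ : Cell, ∑ _i : Fin n, ε * finf ^ (n - 1) := by
          refine Finset.sum_le_sum fun σ _ => Finset.sum_le_sum fun i _ => hone σ i
      _ = (Fintype.card Cell : ℝ) * n * ε * finf ^ (n - 1) := by
          simp [Finset.sum_const, Finset.card_univ]
          ring
  exact this
end

section
/- Let EC : ℝ → ℤ be a step function with jump points contained in [0, f_max], whose total number of jumps (counted with |jump size|, i.e. Σ over jump points of |jump|) is at most |K|. Sample it at the N grid points t_i = i·Δ, Δ = f_max/(N−1), i = 0,…,N−1, and let v(t) be the step function equal to EC(t_i) on [t_i, t_{i+1}). Then ‖EC − v‖₁ restricted to [0, f_max] is at most Δ·(|K|/2 + F), where F = Σ_{i=0}^{N−2} |EC(t_i) − EC(t_{i+1})|. -/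
open MeasureTheory

/-- The jump-sum bound for the difference of the step function at two points. -/
lemma ecc_diff_abs_le {K : ℕ} (a : Fin K → ℝ) (s : Fin K → ℤ)
    (hs : ∀ i, |s i| = 1) {u v : ℝ} (huv : u ≤ v) :
    |((∑ j, if a j ≤ v then s j else 0 : ℤ) : ℝ) -
      ((∑ j, if a j ≤ u then s j else 0 : ℤ) : ℝ)| ≤
    ∑ j, if u < a j ∧ a j ≤ v then (1 : ℝ) else 0 := by
  push_cast [apply_ite (Int.cast : ℤ → ℝ)]
  rw [← Finset.sum_sub_distrib]
  refine (Finset.abs_sum_le_sum_abs _ _).trans (Finset.sum_le_sum ?_)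
  intro j _
  have habs : |(s j : ℝ)| = 1 := by
    rw [← Int.cast_abs, hs j]; norm_num
  by_cases h1 : a j ≤ v <;> by_cases h2 : a j ≤ u
  · rw [if_pos h1, if_pos h2, sub_self, abs_zero, if_neg (fun h => absurd h.1 (not_lt.2 h2))]
  · rw [if_pos h1, if_neg h2, sub_zero, habs, if_pos ⟨not_le.1 h2, h1⟩]
  · exact absurd (h2.trans huv) h1
  · rw [if_neg h1, if_neg h2, sub_self, abs_zero, if_neg (fun h => h1 h.2)]

theorem ecc_vectorization_bound (K N : ℕ) (hN : 2 ≤ N) (fmax : ℝ) (hfmax : 0 < fmax)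
    (a : Fin K → ℝ) (s : Fin K → ℤ)
    (ha : ∀ i, 0 ≤ a i ∧ a i ≤ fmax) (hs : ∀ i, |s i| = 1) :
    ∑ i ∈ Finset.range (N - 1),
        ∫ t in Set.Ico ((i : ℝ) * (fmax / (N - 1))) (((i : ℝ) + 1) * (fmax / (N - 1))),
          |((∑ j, if a j ≤ t then s j else 0 : ℤ) : ℝ) -
           ((∑ j, if a j ≤ (i : ℝ) * (fmax / (N - 1)) then s j else 0 : ℤ) : ℝ)| ≤
      (fmax / (N - 1)) * ((K : ℝ) / 2 +
        ∑ i ∈ Finset.range (N - 1),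
          |((∑ j, if a j ≤ (i : ℝ) * (fmax / (N - 1)) then s j else 0 : ℤ) : ℝ) -
           ((∑ j, if a j ≤ ((i : ℝ) + 1) * (fmax / (N - 1)) then s j else 0 : ℤ) : ℝ)|) := by
  classical
  have hN1 : (1 : ℝ) ≤ (N : ℝ) - 1 := by
    have h2 : (2 : ℝ) ≤ (N : ℝ) := by exact_mod_cast hN
    linarith
  set δ : ℝ := fmax / ((N : ℝ) - 1) with hδdef
  have hδ : 0 < δ := div_pos hfmax (by linarith)
  set V : ℕ → ℝ := fun i =>
    ∑ j, if (i : ℝ) * δ < a j ∧ a j ≤ ((i : ℝ) + 1) * δ then (1 : ℝ) else 0 with hV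
  set D : ℕ → ℝ := fun i =>
    |((∑ j, if a j ≤ (i : ℝ) * δ then s j else 0 : ℤ) : ℝ) -
      ((∑ j, if a j ≤ ((i : ℝ) + 1) * δ then s j else 0 : ℤ) : ℝ)| with hD
  have hVnonneg : ∀ i, 0 ≤ V i := by
    intro i
    apply Finset.sum_nonneg
    intro j _
    split_ifs <;> norm_num
  have hDnonneg : ∀ i, 0 ≤ D i := fun i => abs_nonneg _
  -- key per-interval bound
  have key : ∀ i ∈ Finset.range (N - 1),
      (∫ t in Set.Ico ((i : ℝ) * δ) (((i : ℝ) + 1) * δ),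
        |((∑ j, if a j ≤ t then s j else 0 : ℤ) : ℝ) -
          ((∑ j, if a j ≤ (i : ℝ) * δ then s j else 0 : ℤ) : ℝ)|) ≤
      δ * ((V i + D i) / 2) := by
    intro i _
    have hpt : ∀ t ∈ Set.Ico ((i : ℝ) * δ) (((i : ℝ) + 1) * δ),
        |((∑ j, if a j ≤ t then s j else 0 : ℤ) : ℝ) -
          ((∑ j, if a j ≤ (i : ℝ) * δ then s j else 0 : ℤ) : ℝ)| ≤ (V i + D i) / 2 := by
      intro t ht
      obtain ⟨ht0t, htt1⟩ := ht
      set x : ℝ := ((∑ j, if a j ≤ (i : ℝ) * δ then s j else 0 : ℤ) : ℝ) with hx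
      set y : ℝ := ((∑ j, if a j ≤ t then s j else 0 : ℤ) : ℝ) with hy
      set z : ℝ := ((∑ j, if a j ≤ ((i : ℝ) + 1) * δ then s j else 0 : ℤ) : ℝ) with hz
      have h1 : |y - x| ≤ ∑ j, if (i : ℝ) * δ < a j ∧ a j ≤ t then (1 : ℝ) else 0 :=
        ecc_diff_abs_le a s hs ht0t
      have h2 : |z - y| ≤ ∑ j, if t < a j ∧ a j ≤ ((i : ℝ) + 1) * δ then (1 : ℝ) else 0 :=
        ecc_diff_abs_le a s hs htt1.le
      have h3 : (∑ j, if (i : ℝ) * δ < a j ∧ a j ≤ t then (1 : ℝ) else 0) +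
          (∑ j, if t < a j ∧ a j ≤ ((i : ℝ) + 1) * δ then (1 : ℝ) else 0) ≤ V i := by
        rw [hV]
        rw [← Finset.sum_add_distrib]
        apply Finset.sum_le_sum
        intro j _
        by_cases hA : (i : ℝ) * δ < a j ∧ a j ≤ t
        · by_cases hB : t < a j ∧ a j ≤ ((i : ℝ) + 1) * δ
          · exact absurd hB.1 (not_lt.2 hA.2)
          · rw [if_pos hA, if_neg hB, add_zero,
              if_pos ⟨hA.1, hA.2.trans htt1.le⟩]
        · by_cases hB : t < a j ∧ a j ≤ ((i : ℝ) + 1) * δ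
          · rw [if_neg hA, if_pos hB, zero_add,
              if_pos ⟨lt_of_le_of_lt ht0t hB.1, hB.2⟩]
          · rw [if_neg hA, if_neg hB, add_zero]
            split_ifs <;> norm_num
      have htri : |y - x| ≤ |y - z| + |z - x| := abs_sub_le y z x
      have hD' : D i = |z - x| := by rw [hD, abs_sub_comm]
      have hzy : |y - z| = |z - y| := abs_sub_comm y z
      linarith
    have hmeas : AEStronglyMeasurable
        (fun t => |((∑ j, if a j ≤ t then s j else 0 : ℤ) : ℝ) -
          ((∑ j, if a j ≤ (i : ℝ) * δ then s j else 0 : ℤ) : ℝ)|)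
        (volume.restrict (Set.Ico ((i : ℝ) * δ) (((i : ℝ) + 1) * δ))) := by
      apply Measurable.aestronglyMeasurable
      apply Measurable.abs
      apply Measurable.sub _ measurable_const
      apply Measurable.comp (measurable_from_top : Measurable (Int.cast : ℤ → ℝ))
      apply Finset.measurable_sum
      intro j _
      exact Measurable.ite (measurableSet_le measurable_const measurable_id)
        measurable_const measurable_const
    have hvol : volume (Set.Ico ((i : ℝ) * δ) (((i : ℝ) + 1) * δ)) = ENNReal.ofReal δ := by
      rw [Real.volume_Ico]
      congr 1
      ring
    have hbd := norm_setIntegral_le_of_norm_le_const (μ := volume)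
      (s := Set.Ico ((i : ℝ) * δ) (((i : ℝ) + 1) * δ)) (C := (V i + D i) / 2)
      (f := fun t => |((∑ j, if a j ≤ t then s j else 0 : ℤ) : ℝ) -
            ((∑ j, if a j ≤ (i : ℝ) * δ then s j else 0 : ℤ) : ℝ)|)
      (by rw [hvol]; exact ENNReal.ofReal_lt_top)
      (fun t ht => by simpa using hpt t ht)
    calc (∫ t in Set.Ico ((i : ℝ) * δ) (((i : ℝ) + 1) * δ),
          |((∑ j, if a j ≤ t then s j else 0 : ℤ) : ℝ) -
            ((∑ j, if a j ≤ (i : ℝ) * δ then s j else 0 : ℤ) : ℝ)|)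
        ≤ ‖∫ t in Set.Ico ((i : ℝ) * δ) (((i : ℝ) + 1) * δ),
          |((∑ j, if a j ≤ t then s j else 0 : ℤ) : ℝ) -
            ((∑ j, if a j ≤ (i : ℝ) * δ then s j else 0 : ℤ) : ℝ)|‖ := le_abs_self _
      _ ≤ (V i + D i) / 2 * (volume (Set.Ico ((i : ℝ) * δ) (((i : ℝ) + 1) * δ))).toReal := hbd
      _ = δ * ((V i + D i) / 2) := by
          rw [hvol, ENNReal.toReal_ofReal hδ.le]; ring
  -- sum of V's is at most K
  have hVsum : ∑ i ∈ Finset.range (N - 1), V i ≤ (K : ℝ) := by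
    rw [hV]
    rw [Finset.sum_comm]
    calc ∑ j : Fin K, ∑ i ∈ Finset.range (N - 1),
          (if (i : ℝ) * δ < a j ∧ a j ≤ ((i : ℝ) + 1) * δ then (1 : ℝ) else 0)
        ≤ ∑ _j : Fin K, (1 : ℝ) := by
          apply Finset.sum_le_sum
          intro j _
          have hcard : ((Finset.range (N - 1)).filter
              (fun i : ℕ => (i : ℝ) * δ < a j ∧ a j ≤ ((i : ℝ) + 1) * δ)).card ≤ 1 := by
            apply Finset.card_le_one.2
            intro i hi i' hi'
            simp only [Finset.mem_filter] at hi hi'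
            by_contra hne
            rcases Nat.lt_or_ge i i' with h | h
            · have hle : (i : ℝ) + 1 ≤ (i' : ℝ) := by exact_mod_cast h
              have h1 : a j ≤ ((i : ℝ) + 1) * δ := hi.2.2
              have h2 : (i' : ℝ) * δ < a j := hi'.2.1
              nlinarith
            · have hlt : i' + 1 ≤ i := by omega
              have hle : (i' : ℝ) + 1 ≤ (i : ℝ) := by exact_mod_cast hlt
              have h1 : a j ≤ ((i' : ℝ) + 1) * δ := hi'.2.2
              have h2 : (i : ℝ) * δ < a j := hi.2.1
              nlinarith
          calc ∑ i ∈ Finset.range (N - 1),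
                (if (i : ℝ) * δ < a j ∧ a j ≤ ((i : ℝ) + 1) * δ then (1 : ℝ) else 0)
              = ((Finset.range (N - 1)).filter
                  (fun i : ℕ => (i : ℝ) * δ < a j ∧ a j ≤ ((i : ℝ) + 1) * δ)).card := by
                rw [Finset.sum_boole]
            _ ≤ 1 := by exact_mod_cast hcard
      _ = (K : ℝ) := by simp
  have hDsum : 0 ≤ ∑ i ∈ Finset.range (N - 1), D i :=
    Finset.sum_nonneg fun i _ => hDnonneg i
  calc ∑ i ∈ Finset.range (N - 1),
        ∫ t in Set.Ico ((i : ℝ) * δ) (((i : ℝ) + 1) * δ),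
          |((∑ j, if a j ≤ t then s j else 0 : ℤ) : ℝ) -
            ((∑ j, if a j ≤ (i : ℝ) * δ then s j else 0 : ℤ) : ℝ)|
      ≤ ∑ i ∈ Finset.range (N - 1), δ * ((V i + D i) / 2) := Finset.sum_le_sum key
    _ = δ * ((∑ i ∈ Finset.range (N - 1), V i) / 2 +
          (∑ i ∈ Finset.range (N - 1), D i) / 2) := by
        rw [← Finset.mul_sum]
        congr 1
        rw [← Finset.sum_div, Finset.sum_add_distrib, add_div]
    _ ≤ δ * ((K : ℝ) / 2 + ∑ i ∈ Finset.range (N - 1), D i) := by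
        apply mul_le_mul_of_nonneg_left _ hδ.le
        linarith
end
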